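/- arXiv:2201.05995 — 2 statements merged into one kernel-verified Lean document; each statement's English description precedes it below -/
import Mathlib

section
/- Let 0 ≤ p0 ≤ q0 ≤ 1 and fix M ∈ ℕ. Define channels (stochastic matrices) P_Y(j|i) = C(i,j)·p0^{i−j}·(1−p0)^j for j ≤ i (and 0 otherwise) on {0,…,M}×{0,…,M}, and P_Z(j|i) = q0^i if j = 0 and 1 − q0^i if j = 1, on {0,…,M}×{0,1}. Define Q(0|k) = ((q0−p0)/(1−p0))^k and Q(1|k) = 1 − ((q0−p0)/(1−p0))^k for k ∈ {0,…,M} (assuming p0 < 1). Then P_Z(j|i) = ∑_{k=0}^M Q(j|k)·P_Y(k|i) for all i ∈ {0,…,M} and j ∈ {0,1}; i.e., P_Z is a degraded version of P_Y. -/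
lemma key_sum (p0 : ℝ) (M i : ℕ) (hiM : i ≤ M) (PY : ℕ → ℕ → ℝ)
    (hPY : ∀ i j, PY j i = if j ≤ i then (i.choose j : ℝ) * p0 ^ (i - j) * (1 - p0) ^ j else 0)
    (r : ℝ) :
    ∑ k ∈ Finset.range (M + 1), r ^ k * PY k i = (p0 + (1 - p0) * r) ^ i := by
  have h1 : ∑ k ∈ Finset.range (M + 1), r ^ k * PY k i
      = ∑ k ∈ Finset.range (i + 1), r ^ k * PY k i := by
    symm
    apply Finset.sum_subset
    · intro x hx
      simp only [Finset.mem_range] at *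
      omega
    · intro x _ hx
      simp only [Finset.mem_range, not_lt] at hx
      rw [hPY, if_neg (by omega)]
      ring
  rw [h1]
  have h2 : (p0 + (1 - p0) * r) ^ i = ((1 - p0) * r + p0) ^ i := by ring_nf
  rw [h2, add_pow]
  apply Finset.sum_congr rfl
  intro k hk
  simp only [Finset.mem_range] at hk
  rw [hPY, if_pos (by omega), mul_pow]
  ring

/-- The channel `P_Z` is a degraded version of the channel `P_Y` via `Q`. -/
theorem stmt_2 (p0 q0 : ℝ) (hp : 0 ≤ p0) (hpq : p0 ≤ q0) (hq : q0 ≤ 1) (hp1 : p0 < 1)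
    (M : ℕ) (PY PZ Q : ℕ → ℕ → ℝ)
    (hPY : ∀ i j, PY j i = if j ≤ i then (i.choose j : ℝ) * p0 ^ (i - j) * (1 - p0) ^ j else 0)
    (hPZ0 : ∀ i, PZ 0 i = q0 ^ i)
    (hPZ1 : ∀ i, PZ 1 i = 1 - q0 ^ i)
    (hQ0 : ∀ k, Q 0 k = ((q0 - p0) / (1 - p0)) ^ k)
    (hQ1 : ∀ k, Q 1 k = 1 - ((q0 - p0) / (1 - p0)) ^ k) :
    ∀ i ≤ M, ∀ j ≤ 1, PZ j i = ∑ k ∈ Finset.range (M + 1), Q j k * PY k i := by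
  intro i hiM j hj
  have hne : (1 : ℝ) - p0 ≠ 0 := by linarith
  have hr : p0 + (1 - p0) * ((q0 - p0) / (1 - p0)) = q0 := by
    field_simp
    ring
  interval_cases j
  · rw [hPZ0]
    have := key_sum p0 M i hiM PY hPY ((q0 - p0) / (1 - p0))
    rw [hr] at this
    rw [← this]
    apply Finset.sum_congr rfl
    intro k _
    rw [hQ0]
  · rw [hPZ1]
    have h0 := key_sum p0 M i hiM PY hPY ((q0 - p0) / (1 - p0))
    rw [hr] at h0
    have h1 := key_sum p0 M i hiM PY hPY 1
    simp only [one_pow, one_mul, mul_one] at h1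
    have h1' : ∑ k ∈ Finset.range (M + 1), PY k i = 1 := by
      rw [h1]; norm_num
    calc 1 - q0 ^ i
        = ∑ k ∈ Finset.range (M + 1), PY k i
          - ∑ k ∈ Finset.range (M + 1), ((q0 - p0) / (1 - p0)) ^ k * PY k i := by
          rw [h1', h0]
      _ = ∑ k ∈ Finset.range (M + 1), Q 1 k * PY k i := by
          rw [← Finset.sum_sub_distrib]
          apply Finset.sum_congr rfl
          intro k _
          rw [hQ1]; ring
end

section
/- Let M ∈ ℕ and m = (m_0,…,m_M) ∈ Δ^M a probability vector with ∑_{i=1}^M i·m_i = δ, and let 0 ≤ p0 ≤ q0 ≤ 1 with q0 < 1. If δ is sufficiently small (depending only on p0, q0), then h(∑_{j=1}^M m_j(1−p0^j)) − h(∑_{j=1}^M m_j(1−q0^j)) ≤ h(δ(1−p0)) − h(δ(1−q0)). -/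
/-- The binary entropy function with base-2 logarithm. -/
noncomputable def binEnt (y : ℝ) : ℝ :=
  -(y * Real.logb 2 y) - (1 - y) * Real.logb 2 (1 - y)

lemma binEnt_eq (y : ℝ) : binEnt y = Real.binEntropy y / Real.log 2 := by
  rw [binEnt, Real.binEntropy, Real.logb, Real.logb, Real.log_inv, Real.log_inv]
  ring

lemma mono_aux (k δ0 : ℝ) (hk : 1 < k) (hδ0 : 0 < δ0) (h1 : k * δ0 ≤ 1 / 2)
    (h2 : Real.log δ0 ≤ -(k * (Real.log 2 + Real.log k)) / (k - 1)) :
    MonotoneOn (fun x => Real.binEntropy (k * x) - Real.binEntropy x) (Set.Icc 0 δ0) := by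
  have hk0 : 0 < k := by linarith
  apply monotoneOn_of_deriv_nonneg (convex_Icc 0 δ0)
  · fun_prop
  · rw [interior_Icc]
    intro x hx
    have hx0 : x ≠ 0 := ne_of_gt hx.1
    have hkx1 : k * x ≠ 1 := by nlinarith [hx.2]
    have hx1 : x ≠ 1 := by nlinarith [hx.2, hx.1]
    have H1 : HasDerivAt (fun x : ℝ => k * x) k x := by
      simpa using (hasDerivAt_id x).const_mul k
    have H2 := (Real.hasDerivAt_binEntropy (p := k * x) (by positivity) hkx1).comp x H1
    have H3 := Real.hasDerivAt_binEntropy (p := x) hx0 hx1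
    exact ((H2.sub H3).differentiableAt).differentiableWithinAt
  · rw [interior_Icc]
    intro x hx
    have hx0 : (0:ℝ) < x := hx.1
    have hxδ : x < δ0 := hx.2
    have hkx : k * x < 1/2 := by nlinarith
    have hxh : x < 1/2 := by nlinarith
    have hkx1 : k * x ≠ 1 := by nlinarith
    have H1 : HasDerivAt (fun x : ℝ => k * x) k x := by
      simpa using (hasDerivAt_id x).const_mul k
    have H2 := (Real.hasDerivAt_binEntropy (p := k * x) (by positivity) hkx1).comp x H1
    have H3 := Real.hasDerivAt_binEntropy (p := x) (ne_of_gt hx0) (by nlinarith)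
    have HD : HasDerivAt (fun x => Real.binEntropy (k * x) - Real.binEntropy x)
        ((Real.log (1 - k * x) - Real.log (k * x)) * k - (Real.log (1 - x) - Real.log x)) x :=
      H2.sub H3
    rw [HD.deriv]
    have hlogkx : Real.log (k * x) = Real.log k + Real.log x :=
      Real.log_mul (ne_of_gt hk0) (ne_of_gt hx0)
    have e1 : -Real.log 2 ≤ Real.log (1 - k * x) := by
      have : Real.log (1/2) ≤ Real.log (1 - k * x) := by
        apply Real.log_le_log (by norm_num)
        linarith
      rwa [Real.log_div one_ne_zero two_ne_zero, Real.log_one, zero_sub] at this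
    have e2 : Real.log (1 - x) ≤ 0 := Real.log_nonpos (by linarith) (by linarith)
    have e3 : Real.log x ≤ -(k * (Real.log 2 + Real.log k)) / (k - 1) :=
      le_trans (Real.log_le_log hx0 hxδ.le) h2
    have hk1 : (0:ℝ) < k - 1 := by linarith
    have e4 : k * (Real.log 2 + Real.log k) ≤ -((k - 1) * Real.log x) := by
      have := (le_div_iff₀ hk1).mp e3
      linarith
    rw [hlogkx]
    nlinarith [e1, e2, e4]

lemma geom_ineq (x y : ℝ) (hx0 : 0 ≤ x) (hxy : x ≤ y) (hy1 : y ≤ 1) (j : ℕ) :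
    (1 - y) * (1 - x ^ j) ≤ (1 - x) * (1 - y ^ j) := by
  have hgx := geom_sum_mul x j
  have hgy := geom_sum_mul y j
  have ex : 1 - x ^ j = (1 - x) * ∑ i ∈ Finset.range j, x ^ i := by linear_combination hgx
  have ey : 1 - y ^ j = (1 - y) * ∑ i ∈ Finset.range j, y ^ i := by linear_combination hgy
  have hS : (∑ i ∈ Finset.range j, x ^ i) ≤ ∑ i ∈ Finset.range j, y ^ i :=
    Finset.sum_le_sum fun i _ => pow_le_pow_left₀ hx0 hxy i
  have h1x : (0:ℝ) ≤ 1 - x := by linarith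
  have h1y : (0:ℝ) ≤ 1 - y := by linarith
  rw [ex, ey]
  nlinarith [mul_le_mul_of_nonneg_left hS (mul_nonneg h1y h1x)]

/-- For `0 ≤ p0 ≤ q0 < 1` and sufficiently small `δ > 0` (depending only on `p0, q0`),
every probability vector `m` on `{0,…,M}` with first moment `δ` satisfies
`h(∑ m_j (1-p0^j)) - h(∑ m_j (1-q0^j)) ≤ h(δ(1-p0)) - h(δ(1-q0))`. -/
theorem stmt_13 (p0 q0 : ℝ) (h0 : 0 ≤ p0) (hpq : p0 ≤ q0) (hq : q0 < 1) :
    ∃ δ0 > (0 : ℝ), ∀ δ : ℝ, 0 < δ → δ ≤ δ0 →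
      ∀ (M : ℕ) (m : ℕ → ℝ), (∀ i, 0 ≤ m i) →
        (∑ i ∈ Finset.range (M + 1), m i) = 1 →
        (∑ i ∈ Finset.Icc 1 M, (i : ℝ) * m i) = δ →
        binEnt (∑ j ∈ Finset.Icc 1 M, m j * (1 - p0 ^ j))
          - binEnt (∑ j ∈ Finset.Icc 1 M, m j * (1 - q0 ^ j))
          ≤ binEnt (δ * (1 - p0)) - binEnt (δ * (1 - q0)) := by
  rcases eq_or_lt_of_le hpq with rfl | hlt
  · exact ⟨1, one_pos, fun δ _ _ M m _ _ _ => by simp⟩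
  have hq0 : 0 ≤ q0 := h0.trans hpq
  have hp1 : p0 < 1 := lt_trans hlt hq
  have h1q : (0:ℝ) < 1 - q0 := by linarith
  set k : ℝ := (1 - p0) / (1 - q0) with hkdef
  have hk : 1 < k := by rw [hkdef, lt_div_iff₀ h1q]; linarith
  have hk0 : (0:ℝ) < k := by linarith
  set δ0 : ℝ := min (1 / (2 * k))
      (Real.exp (-(k * (Real.log 2 + Real.log k)) / (k - 1))) with hδ0def
  have hδ0pos : 0 < δ0 := lt_min (by positivity) (Real.exp_pos _)
  have h1 : k * δ0 ≤ 1 / 2 := by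
    have h := min_le_left (1 / (2 * k)) (Real.exp (-(k * (Real.log 2 + Real.log k)) / (k - 1)))
    have : k * δ0 ≤ k * (1 / (2 * k)) := by
      apply mul_le_mul_of_nonneg_left _ hk0.le
      exact h
    have hkk : k * (1 / (2 * k)) = 1 / 2 := by field_simp
    linarith
  have h2 : Real.log δ0 ≤ -(k * (Real.log 2 + Real.log k)) / (k - 1) := by
    have h := min_le_right (1 / (2 * k)) (Real.exp (-(k * (Real.log 2 + Real.log k)) / (k - 1)))
    calc Real.log δ0 ≤ Real.log (Real.exp (-(k * (Real.log 2 + Real.log k)) / (k - 1))) :=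
          Real.log_le_log hδ0pos h
      _ = _ := Real.log_exp _
  have hmono := mono_aux k δ0 hk hδ0pos h1 h2
  refine ⟨δ0, hδ0pos, ?_⟩
  intro δ hδpos hδle M m hm hsum hmom
  set A : ℝ := ∑ j ∈ Finset.Icc 1 M, m j * (1 - p0 ^ j) with hAdef
  set B : ℝ := ∑ j ∈ Finset.Icc 1 M, m j * (1 - q0 ^ j) with hBdef
  have hA0 : 0 ≤ A :=
    Finset.sum_nonneg fun j _ => mul_nonneg (hm j)
      (by nlinarith [pow_le_one₀ h0 hp1.le (n := j)])
  have hB0 : 0 ≤ B :=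
    Finset.sum_nonneg fun j _ => mul_nonneg (hm j)
      (by nlinarith [pow_le_one₀ hq0 hq.le (n := j)])
  have hBb : B ≤ δ * (1 - q0) := by
    calc B ≤ ∑ j ∈ Finset.Icc 1 M, (j : ℝ) * m j * (1 - q0) := by
          apply Finset.sum_le_sum
          intro j _
          have hber : 1 - q0 ^ j ≤ (j : ℝ) * (1 - q0) := by
            have h := one_add_mul_le_pow (a := q0 - 1) (by linarith) j
            have he : ((1:ℝ) + (q0 - 1)) = q0 := by ring
            rw [he] at h
            linarith
          calc m j * (1 - q0 ^ j) ≤ m j * ((j : ℝ) * (1 - q0)) :=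
                mul_le_mul_of_nonneg_left hber (hm j)
            _ = (j : ℝ) * m j * (1 - q0) := by ring
      _ = δ * (1 - q0) := by rw [← Finset.sum_mul, hmom]
  have hAkB : A ≤ k * B := by
    calc A ≤ ∑ j ∈ Finset.Icc 1 M, k * (m j * (1 - q0 ^ j)) := by
          apply Finset.sum_le_sum
          intro j _
          have hg := geom_ineq p0 q0 h0 hpq hq.le j
          have key : 1 - p0 ^ j ≤ k * (1 - q0 ^ j) := by
            rw [hkdef, div_mul_eq_mul_div, le_div_iff₀ h1q]
            nlinarith [hg]
          calc m j * (1 - p0 ^ j) ≤ m j * (k * (1 - q0 ^ j)) :=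
                mul_le_mul_of_nonneg_left key (hm j)
            _ = k * (m j * (1 - q0 ^ j)) := by ring
      _ = k * B := by rw [← Finset.mul_sum]
  have hbδ0 : δ * (1 - q0) ≤ δ0 := by nlinarith
  have hkb : k * (δ * (1 - q0)) = δ * (1 - p0) := by
    rw [hkdef]; field_simp
  have hkBhalf : k * B ≤ 1 / 2 := by
    have : k * B ≤ k * δ0 := mul_le_mul_of_nonneg_left (hBb.trans hbδ0) hk0.le
    linarith
  have hmonoEnt : Real.binEntropy A ≤ Real.binEntropy (k * B) := by
    apply Real.binEntropy_strictMonoOn.monotoneOn _ _ hAkB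
    · constructor
      · exact hA0
      · rw [show ((2:ℝ)⁻¹ = 1/2) by norm_num]; linarith
    · constructor
      · positivity
      · rw [show ((2:ℝ)⁻¹ = 1/2) by norm_num]; linarith
  have hF := hmono (Set.mem_Icc.mpr ⟨hB0, hBb.trans hbδ0⟩)
      (Set.mem_Icc.mpr ⟨by positivity, hbδ0⟩) hBb
  simp only at hF
  rw [hkb] at hF
  have main : Real.binEntropy A - Real.binEntropy B ≤
      Real.binEntropy (δ * (1 - p0)) - Real.binEntropy (δ * (1 - q0)) := by
    linarith
  rw [binEnt_eq, binEnt_eq, binEnt_eq, binEnt_eq, ← sub_div, ← sub_div]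
  have hL : (0:ℝ) < Real.log 2 := Real.log_pos (by norm_num)
  gcongr
end
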